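/- Let $R$ be a commutative ring that is isomorphic as an algebra to a tensor product $S \otimes_k A$, where $S$ is a Noetherian domain with maximal ideal $\mathfrak{m}_1$ and $A$ is a finite-dimensional local $k$-algebra with maximal ideal $\mathfrak{m}_2$. Let $\mathfrak{m} = \mathfrak{m}_1 \otimes 1 + 1 \otimes \mathfrak{m}_2$. Then $\bigcap_{n \geq 1} \mathfrak{m}^n = 0$. -/
import Mathlib


open Algebra.TensorProduct in
/-- If `S` is a Noetherian domain over `k` with maximal ideal `m₁`
satisfying `⋂ₙ m₁ⁿ = 0`, and `A` is a finite-dimensional local `k`-algebra with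
maximal ideal `m₂`, then in `S ⊗[k] A` the ideal
`m = m₁ ⊗ 1 + 1 ⊗ m₂` satisfies `⋂ₙ₌₁ mⁿ = 0`. -/
theorem stmt0 (k : Type*) [Field k] (S A : Type*) [CommRing S] [CommRing A]
    [Algebra k S] [Algebra k A] [IsNoetherianRing S] [IsDomain S]
    [FiniteDimensional k A] [IsLocalRing A]
    (m₁ : Ideal S) (hm₁ : m₁.IsMaximal)
    (hm₁int : (⨅ n ≥ 1, m₁ ^ n) = ⊥)
    (m₂ : Ideal A) (hm₂ : m₂ = IsLocalRing.maximalIdeal A)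
    (m : Ideal (TensorProduct k S A))
    (hm : m = m₁.map (includeLeft (S := k) : S →ₐ[k] TensorProduct k S A).toRingHom
        ⊔ m₂.map (includeRight : A →ₐ[k] TensorProduct k S A).toRingHom) :
    (⨅ n ≥ 1, m ^ n) = ⊥ := by
  classical
  have hart : IsArtinianRing A := isArtinian_of_tower k inferInstance
  have hnil : IsNilpotent m₂ := by
    rw [hm₂, ← IsLocalRing.jacobson_eq_maximalIdeal (⊥ : Ideal A) bot_ne_top]
    exact IsArtinianRing.isNilpotent_jacobson_bot
  obtain ⟨N, hN⟩ := hnil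
  set T := TensorProduct k S A
  set f : S →+* T := (includeLeft (S := k) : S →ₐ[k] T).toRingHom with hf
  have hf_alg : f = algebraMap S T := rfl
  -- J^(N+1) = ⊥
  have hJ : (m₂.map (includeRight : A →ₐ[k] T).toRingHom) ^ (N + 1) = ⊥ := by
    rw [← Ideal.map_pow, pow_succ, hN, zero_mul, Ideal.zero_eq_bot, Ideal.map_bot]
  -- reduction: the infimum is contained in each (m₁^n).map f
  have key : ∀ n : ℕ, (⨅ n ≥ 1, m ^ n) ≤ (m₁ ^ n).map f := by
    intro n
    have h1 : (⨅ n ≥ 1, m ^ n) ≤ m ^ (n + (N + 1)) := by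
      exact iInf₂_le (n + (N + 1)) (by omega)
    refine h1.trans ?_
    rw [hm]
    refine (Ideal.sup_pow_add_le_pow_sup_pow).trans ?_
    rw [hJ, sup_bot_eq, Ideal.map_pow]
  rw [eq_bot_iff]
  intro x hx
  -- coordinates
  let b := Module.finBasis k A
  let bb := b.baseChange S
  have hcoord : ∀ i, bb.repr x i = 0 := by
    intro i
    have : bb.repr x i ∈ (⨅ n ≥ 1, m₁ ^ n) := by
      refine (Submodule.mem_iInf _).2 fun n => (Submodule.mem_iInf _).2 fun hn => ?_
      have hxn : x ∈ (m₁ ^ n).map f := key n hx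
      rw [hf_alg] at hxn
      have hsm : x ∈ (m₁ ^ n) • (⊤ : Submodule S T) := by
        rw [Ideal.smul_top_eq_map]; exact hxn
      rw [← bb.span_eq] at hsm
      obtain ⟨a, ha, rfl⟩ := (Submodule.mem_ideal_smul_span_iff_exists_sum _ _ _).1 hsm
      have : bb.repr (a.sum fun i c => c • bb i) = a := by
        rw [← Finsupp.linearCombination_apply, bb.repr_linearCombination]
      rw [this]
      exact ha i
    rw [hm₁int] at this
    exact this
  have : bb.repr x = 0 := Finsupp.ext hcoord
  simpa using congrArg bb.repr.symm this
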